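/- Let F = F_{0,1}. Then p = (−1/5, 2/5) is a fixed point of F; the sets P = {(1, 0), (−1, 0), (1, 2)} and Q = {(−1/3, 0), (1/3, 2/3), (−1/3, 2/3)} are periodic orbits of F of minimal period 3; and for every (x, y) ∈ ℝ² with (x, y) ≠ p there exists n ∈ ℕ such that F^n(x, y) ∈ P ∪ Q. -/
import Mathlib

/-- The piecewise linear map `F_{a,b}(x,y) = (|x| - y + a, x - |y| + b)`. -/
noncomputable def F (a b : ℝ) : ℝ × ℝ → ℝ × ℝ :=
  fun p => (|p.1| - p.2 + a, p.1 - |p.2| + b)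

/-- `S` is a periodic orbit of `f` of minimal period `n`: it is the (finite) orbit
`{p, f p, …, f^[n-1] p}` of some periodic point `p` of minimal period `n`. -/
def IsPeriodicOrbit (f : ℝ × ℝ → ℝ × ℝ) (n : ℕ) (S : Set (ℝ × ℝ)) : Prop :=
  ∃ p : ℝ × ℝ, Function.minimalPeriod f p = n ∧ 0 < n ∧
    S = (fun k : ℕ => f^[k] p) '' Set.Iio n

namespace CaseA0B1

/-- Evaluation of `F 0 1` in the closed first quadrant. -/
lemma stepQ1 (x y : ℝ) (hx : 0 ≤ x) (hy : 0 ≤ y) : F 0 1 (x, y) = (x - y, x - y + 1) := by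
  simp [F, abs_of_nonneg hx, abs_of_nonneg hy]

lemma stepQ2 (x y : ℝ) (hx : x ≤ 0) (hy : 0 ≤ y) : F 0 1 (x, y) = (-x - y, x - y + 1) := by
  simp [F, abs_of_nonpos hx, abs_of_nonneg hy]

lemma stepQ3 (x y : ℝ) (hx : x ≤ 0) (hy : y ≤ 0) : F 0 1 (x, y) = (-x - y, x + y + 1) := by
  simp [F, abs_of_nonpos hx, abs_of_nonpos hy]

lemma stepQ4 (x y : ℝ) (hx : 0 ≤ x) (hy : y ≤ 0) : F 0 1 (x, y) = (x - y, x + y + 1) := by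
  simp [F, abs_of_nonneg hx, abs_of_nonpos hy]

/-- The two periodic orbits, as a target set. -/
def Tgt : Set (ℝ × ℝ) :=
  (({(1, 0), (-1, 0), (1, 2)} : Set (ℝ × ℝ)) ∪
    {(-1/3, 0), (1/3, 2/3), (-1/3, 2/3)})

def Reach (q : ℝ × ℝ) : Prop := ∃ n : ℕ, (F 0 1)^[n] q ∈ Tgt

lemma reach_step {q : ℝ × ℝ} (h : Reach (F 0 1 q)) : Reach q := by
  obtain ⟨n, hn⟩ := h
  exact ⟨n + 1, by rwa [Function.iterate_succ_apply]⟩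

lemma reach_of_eq {q r : ℝ × ℝ} (h : F 0 1 q = r) (hr : Reach r) : Reach q :=
  reach_step (h ▸ hr)

lemma reach_neg1 : Reach (-1, 0) := ⟨0, by simp [Tgt]⟩

lemma reach_q0 : Reach (-1/3, 0) := ⟨0, by simp [Tgt]⟩

/-- From `(s,0)` with `s ≥ 0` we reach `(-1,0)` in two steps. -/
lemma axis_nonneg {s : ℝ} (hs : 0 ≤ s) : Reach (s, 0) := by
  have h1 : F 0 1 (s, 0) = (s, s + 1) := by
    rw [stepQ1 s 0 hs le_rfl]; norm_num
  have h2 : F 0 1 (s, s + 1) = (-1, 0) := by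
    rw [stepQ1 s (s + 1) hs (by linarith)]; norm_num
  exact reach_of_eq h1 (reach_of_eq h2 reach_neg1)

/-- From `(s,0)` with `-1 ≤ s ≤ -1/2` we reach `(-1,0)` in three steps. -/
lemma axis_mid {s : ℝ} (h1 : -1 ≤ s) (h2 : s ≤ -1/2) : Reach (s, 0) := by
  have e1 : F 0 1 (s, 0) = (-s, s + 1) := by
    rw [stepQ2 s 0 (by linarith) le_rfl]; norm_num
  have e2 : F 0 1 (-s, s + 1) = (-2*s - 1, -2*s) := by
    rw [stepQ1 (-s) (s + 1) (by linarith) (by linarith)]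
    rw [Prod.mk.injEq]; constructor <;> ring
  have e3 : F 0 1 (-2*s - 1, -2*s) = (-1, 0) := by
    rw [stepQ1 (-2*s - 1) (-2*s) (by linarith) (by linarith)]
    rw [Prod.mk.injEq]; constructor <;> ring
  exact reach_of_eq e1 (reach_of_eq e2 (reach_of_eq e3 reach_neg1))

/-- From `(s,0)` with `-1/2 ≤ s ≤ 0`, three steps lead to `(4s+1, 0)`. -/
lemma axis_contract {s : ℝ} (h1 : -1/2 ≤ s) (h2 : s ≤ 0)
    (h : Reach (4*s + 1, 0)) : Reach (s, 0) := by
  have e1 : F 0 1 (s, 0) = (-s, s + 1) := by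
    rw [stepQ2 s 0 h2 le_rfl]; norm_num
  have e2 : F 0 1 (-s, s + 1) = (-2*s - 1, -2*s) := by
    rw [stepQ1 (-s) (s + 1) (by linarith) (by linarith)]
    rw [Prod.mk.injEq]; constructor <;> ring
  have e3 : F 0 1 (-2*s - 1, -2*s) = (4*s + 1, 0) := by
    rw [stepQ2 (-2*s - 1) (-2*s) (by linarith) (by linarith)]
    rw [Prod.mk.injEq]; constructor <;> ring
  exact reach_of_eq e1 (reach_of_eq e2 (reach_of_eq e3 h))

lemma axis_base {s : ℝ} (h1 : -1/2 ≤ s) (h2 : s ≤ 0) (h : 1/6 ≤ |s + 1/3|) :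
    Reach (s, 0) := by
  rcases le_abs'.mp h with h' | h'
  · -- s + 1/3 ≤ -1/6, i.e. s ≤ -1/2
    exact axis_mid (by linarith) (by linarith)
  · -- 1/6 ≤ s + 1/3, i.e. s ≥ -1/6
    exact axis_contract h1 h2 (axis_nonneg (by linarith))

lemma axis_core : ∀ k : ℕ, ∀ s : ℝ, -1/2 ≤ s → s ≤ 0 →
    1/6 * (1/4 : ℝ)^k ≤ |s + 1/3| → Reach (s, 0) := by
  intro k
  induction k with
  | zero =>
      intro s h1 h2 h
      exact axis_base h1 h2 (by simpa using h)
  | succ k ih =>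
      intro s h1 h2 h
      by_cases hb : 1/6 ≤ |s + 1/3|
      · exact axis_base h1 h2 hb
      · push_neg at hb
        have hab := abs_lt.mp hb
        -- so -1/2 < s < -1/6
        apply axis_contract h1 h2
        have habs : |4*s + 1 + 1/3| = 4 * |s + 1/3| := by
          rw [show (4*s + 1 + 1/3 : ℝ) = 4 * (s + 1/3) by ring, abs_mul]
          norm_num
        have hpow : (1/6 : ℝ) * (1/4)^k ≤ |4*s + 1 + 1/3| := by
          rw [habs]
          rw [pow_succ] at h
          linarith
        rcases le_or_gt 0 (4*s + 1) with hc | hc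
        · exact axis_nonneg hc
        · rcases le_or_gt (4*s + 1) (-1/2) with hd | hd
          · exact axis_mid (by linarith) hd
          · exact ih (4*s + 1) (by linarith) (by linarith) hpow

lemma axis_in {s : ℝ} (hs : -1 ≤ s) : Reach (s, 0) := by
  rcases le_or_gt 0 s with h | h
  · exact axis_nonneg h
  · rcases le_or_gt s (-1/2) with h' | h'
    · exact axis_mid hs h'
    · by_cases h3 : s = -1/3
      · subst h3; exact reach_q0
      · have hpos : 0 < |s + 1/3| := by
          rw [abs_pos]
          intro hc; exact h3 (by linarith)
        obtain ⟨k, hk⟩ := exists_pow_lt_of_lt_one hpos (by norm_num : (1/4 : ℝ) < 1)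
        have hk' : (1/6 : ℝ) * (1/4)^k ≤ |s + 1/3| := by
          have : (0:ℝ) ≤ (1/4)^k := by positivity
          linarith
        exact axis_core k s h'.le h.le hk'

/-- Every point of the horizontal axis reaches the target. -/
lemma axis (s : ℝ) : Reach (s, 0) := by
  rcases le_or_gt (-1) s with h | h
  · exact axis_in h
  · have e1 : F 0 1 (s, 0) = (-s, s + 1) := by
      rw [stepQ2 s 0 (by linarith) le_rfl]; norm_num
    have e2 : F 0 1 (-s, s + 1) = (-2*s - 1, 2) := by
      rw [stepQ4 (-s) (s + 1) (by linarith) (by linarith)]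
      rw [Prod.mk.injEq]; constructor <;> ring
    have e3 : F 0 1 (-2*s - 1, 2) = (-2*s - 3, -2*s - 2) := by
      rw [stepQ1 (-2*s - 1) 2 (by linarith) (by norm_num)]
      rw [Prod.mk.injEq]; constructor <;> ring
    apply reach_of_eq e1 (reach_of_eq e2 (reach_of_eq e3 ?_))
    rcases le_or_gt s (-3/2) with h4 | h4
    · have e4 : F 0 1 (-2*s - 3, -2*s - 2) = (-1, 0) := by
        rw [stepQ1 (-2*s - 3) (-2*s - 2) (by linarith) (by linarith)]
        rw [Prod.mk.injEq]; constructor <;> ring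
      exact reach_of_eq e4 reach_neg1
    · have e4 : F 0 1 (-2*s - 3, -2*s - 2) = (4*s + 5, 0) := by
        rw [stepQ2 (-2*s - 3) (-2*s - 2) (by linarith) (by linarith)]
        rw [Prod.mk.injEq]; constructor <;> ring
      exact reach_of_eq e4 (axis_in (by linarith))

lemma line_ge {t : ℝ} (ht : -1 ≤ t) : Reach (t, t + 1) := by
  rcases le_or_gt 0 t with h | h
  · have e : F 0 1 (t, t + 1) = (-1, 0) := by
      rw [stepQ1 t (t + 1) h (by linarith)]; rw [Prod.mk.injEq]; constructor <;> ring
    exact reach_of_eq e reach_neg1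
  · have e : F 0 1 (t, t + 1) = (-2*t - 1, 0) := by
      rw [stepQ2 t (t + 1) h.le (by linarith)]; rw [Prod.mk.injEq]; constructor <;> ring
    exact reach_of_eq e (axis _)

/-- Every point of the line `y = x + 1` reaches the target. -/
lemma line (t : ℝ) : Reach (t, t + 1) := by
  rcases le_or_gt (-1) t with h | h
  · exact line_ge h
  · have e1 : F 0 1 (t, t + 1) = (-2*t - 1, 2*t + 2) := by
      rw [stepQ3 t (t + 1) (by linarith) (by linarith)]; rw [Prod.mk.injEq]; constructor <;> ring
    have e2 : F 0 1 (-2*t - 1, 2*t + 2) = (-4*t - 3, 2) := by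
      rw [stepQ4 (-2*t - 1) (2*t + 2) (by linarith) (by linarith)]
      rw [Prod.mk.injEq]; constructor <;> ring
    have e3 : F 0 1 (-4*t - 3, 2) = (-4*t - 5, (-4*t - 5) + 1) := by
      rw [stepQ1 (-4*t - 3) 2 (by linarith) (by norm_num)]
      rw [Prod.mk.injEq]; constructor <;> ring
    exact reach_of_eq e1 (reach_of_eq e2 (reach_of_eq e3 (line_ge (by linarith))))

/-- First quadrant. -/
lemma q1 {x y : ℝ} (hx : 0 ≤ x) (hy : 0 ≤ y) : Reach (x, y) := by
  have e : F 0 1 (x, y) = (x - y, (x - y) + 1) := stepQ1 x y hx hy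
  exact reach_of_eq e (line _)

/-- Fourth quadrant. -/
lemma q4 {x y : ℝ} (hx : 0 ≤ x) (hy : y ≤ 0) : Reach (x, y) := by
  have e : F 0 1 (x, y) = (x - y, x + y + 1) := stepQ4 x y hx hy
  rcases le_or_gt 0 (x + y + 1) with h | h
  · exact reach_of_eq e (q1 (by linarith) h)
  · have e2 : F 0 1 (x - y, x + y + 1) = (-2*y - 1, 2*x + 2) := by
      rw [stepQ4 (x - y) (x + y + 1) (by linarith) h.le]
      rw [Prod.mk.injEq]; constructor <;> ring
    exact reach_of_eq e (reach_of_eq e2 (q1 (by linarith) (by linarith)))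

/-- Third quadrant. -/
lemma q3 {x y : ℝ} (hx : x ≤ 0) (hy : y ≤ 0) : Reach (x, y) := by
  have e : F 0 1 (x, y) = (-x - y, x + y + 1) := stepQ3 x y hx hy
  rcases le_or_gt 0 (x + y + 1) with h | h
  · exact reach_of_eq e (q1 (by linarith) h)
  · exact reach_of_eq e (q4 (by linarith) h.le)

/-- Any point outside the trapping region `D` reaches the target. -/
lemma outsideD (x y : ℝ) (h : ¬(x ≤ 0 ∧ 0 ≤ y ∧ 0 ≤ x + y ∧ 0 ≤ x - y + 1)) :
    Reach (x, y) := by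
  by_cases hx : x ≤ 0
  · by_cases hy : 0 ≤ y
    · by_cases hxy : 0 ≤ x + y
      · have hd : ¬ 0 ≤ x - y + 1 := fun hd => h ⟨hx, hy, hxy, hd⟩
        push_neg at hd
        have e : F 0 1 (x, y) = (-x - y, x - y + 1) := stepQ2 x y hx hy
        exact reach_of_eq e (q3 (by linarith) (by linarith))
      · push_neg at hxy
        have e : F 0 1 (x, y) = (-x - y, x - y + 1) := stepQ2 x y hx hy
        rcases le_or_gt 0 (x - y + 1) with h' | h'
        · exact reach_of_eq e (q1 (by linarith) h')
        · exact reach_of_eq e (q4 (by linarith) h'.le)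
    · push_neg at hy
      exact q3 hx hy.le
  · push_neg at hx
    by_cases hy : 0 ≤ y
    · exact q1 hx.le hy
    · push_neg at hy
      exact q4 hx.le hy.le

/-- The main expansion induction: any point whose sup-distance to the fixed point
is at least `2⁻ᵏ` reaches the target. -/
lemma main_ind : ∀ k : ℕ, ∀ q : ℝ × ℝ,
    1 ≤ 2^k * max |q.1 + 1/5| |q.2 - 2/5| → Reach q := by
  intro k
  induction k with
  | zero =>
      rintro ⟨x, y⟩ h
      simp only [pow_zero, one_mul] at h
      apply outsideD
      rintro ⟨hx, hy, hxy, hd⟩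
      have hx1 : |x + 1/5| ≤ 4/5 := abs_le.mpr ⟨by linarith, by linarith⟩
      have hy1 : |y - 2/5| ≤ 4/5 := abs_le.mpr ⟨by linarith, by linarith⟩
      have := max_le hx1 hy1

      linarith
  | succ k ih =>
      rintro ⟨x, y⟩ h
      by_cases hD : x ≤ 0 ∧ 0 ≤ y ∧ 0 ≤ x + y ∧ 0 ≤ x - y + 1
      · obtain ⟨hx, hy, hxy, hd⟩ := hD
        have e1 : F 0 1 (x, y) = (-x - y, x - y + 1) := stepQ2 x y hx hy
        have e2 : F 0 1 (-x - y, x - y + 1) = (2*y - 1, -2*x) := by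
          rw [stepQ2 (-x - y) (x - y + 1) (by linarith) hd]
          rw [Prod.mk.injEq]; constructor <;> ring
        apply reach_of_eq e1 (reach_of_eq e2 ?_)
        apply ih
        have ha : |(2*y - 1 : ℝ) + 1/5| = 2 * |y - 2/5| := by
          rw [show (2*y - 1 + 1/5 : ℝ) = 2 * (y - 2/5) by ring, abs_mul]
          norm_num
        have hb : |(-2*x : ℝ) - 2/5| = 2 * |x + 1/5| := by
          rw [show (-2*x - 2/5 : ℝ) = 2 * (-(x + 1/5)) by ring, abs_mul, abs_neg]
          norm_num
        simp only [ha, hb]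
        rw [max_comm, ← mul_max_of_nonneg _ _ (by norm_num : (0:ℝ) ≤ 2)]
        rw [pow_succ] at h
        simp only at h ⊢
        nlinarith [le_max_left |x + 1/5| |y - 2/5|]
      · exact outsideD x y hD

/-- Every point of the plane other than the fixed point reaches the target. -/
lemma reach_all {q : ℝ × ℝ} (hq : q ≠ (-1/5, 2/5)) : Reach q := by
  have hM : 0 < max |q.1 + 1/5| |q.2 - 2/5| := by
    rcases eq_or_ne q.1 (-1/5) with h1 | h1
    · have h2 : q.2 ≠ 2/5 := by
        intro h2; exact hq (Prod.ext h1 h2)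
      have : 0 < |q.2 - 2/5| := abs_pos.mpr (sub_ne_zero.mpr h2)
      exact lt_of_lt_of_le this (le_max_right _ _)
    · have : 0 < |q.1 + 1/5| := by
        rw [abs_pos]
        intro hc; exact h1 (by linarith)
      exact lt_of_lt_of_le this (le_max_left _ _)
  obtain ⟨k, hk⟩ := exists_pow_lt_of_lt_one hM (by norm_num : (1/2 : ℝ) < 1)
  apply main_ind k
  have h2 : (0:ℝ) < 2^k := by positivity
  have : (2:ℝ)^k * (1/2)^k = 1 := by
    rw [← mul_pow]; norm_num
  nlinarith

end CaseA0B1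

/-- For `F = F_{0,1}`: `p = (-1/5, 2/5)` is a fixed point, `P` and `Q` are 3-periodic
orbits, and every point other than `p` eventually lands in `P ∪ Q`. -/
theorem case_a_zero_b_one :
    F 0 1 (-1/5, 2/5) = (-1/5, 2/5) ∧
    IsPeriodicOrbit (F 0 1) 3 {(1, 0), (-1, 0), (1, 2)} ∧
    IsPeriodicOrbit (F 0 1) 3 {(-1/3, 0), (1/3, 2/3), (-1/3, 2/3)} ∧
    ∀ x : ℝ × ℝ, x ≠ (-1/5, 2/5) →
      ∃ n : ℕ, (F 0 1)^[n] x ∈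
        (({(1, 0), (-1, 0), (1, 2)} : Set (ℝ × ℝ)) ∪
         {(-1/3, 0), (1/3, 2/3), (-1/3, 2/3)}) := by
  have iio3 : (Set.Iio (3:ℕ)) = {0, 1, 2} := by
    ext n
    simp only [Set.mem_Iio, Set.mem_insert_iff, Set.mem_singleton_iff]
    omega
  refine ⟨?_, ?_, ?_, ?_⟩
  · simp only [F]
    rw [abs_of_nonpos (by norm_num), abs_of_nonneg (by norm_num)]
    norm_num
  · -- orbit P
    have e1 : F 0 1 (1, 0) = (1, 2) := by
      rw [CaseA0B1.stepQ1 1 0 (by norm_num) le_rfl]; norm_num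
    have e2 : F 0 1 (1, 2) = (-1, 0) := by
      rw [CaseA0B1.stepQ1 1 2 (by norm_num) (by norm_num)]; norm_num
    have e3 : F 0 1 (-1, 0) = (1, 0) := by
      rw [CaseA0B1.stepQ2 (-1) 0 (by norm_num) le_rfl]; norm_num
    have hper : Function.IsPeriodicPt (F 0 1) 3 (1, 0) := by
      show (F 0 1)^[3] (1, 0) = (1, 0)
      show F 0 1 (F 0 1 (F 0 1 (1, 0))) = (1, 0)
      rw [e1, e2, e3]
    refine ⟨(1, 0), ?_, by norm_num, ?_⟩
    · rcases (Nat.prime_three.eq_one_or_self_of_dvd _ hper.minimalPeriod_dvd) with h | h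
      · exfalso
        have := Function.minimalPeriod_eq_one_iff_isFixedPt.mp h
        rw [Function.IsFixedPt, e1] at this
        exact absurd (congrArg Prod.snd this) (by norm_num)
      · exact h
    · rw [iio3]
      rw [Set.image_insert_eq, Set.image_insert_eq, Set.image_singleton]
      have i0 : (F 0 1)^[0] (1, 0) = (1, 0) := rfl
      have i1 : (F 0 1)^[1] (1, 0) = (1, 2) := by
        show F 0 1 (1, 0) = (1, 2); exact e1
      have i2 : (F 0 1)^[2] (1, 0) = (-1, 0) := by
        show F 0 1 (F 0 1 (1, 0)) = (-1, 0); rw [e1, e2]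
      rw [i0, i1, i2]
      ext q
      simp only [Set.mem_insert_iff, Set.mem_singleton_iff]
      tauto
  · -- orbit Q
    have e1 : F 0 1 (-1/3, 0) = (1/3, 2/3) := by
      rw [CaseA0B1.stepQ2 (-1/3) 0 (by norm_num) le_rfl]; norm_num
    have e2 : F 0 1 (1/3, 2/3) = (-1/3, 2/3) := by
      rw [CaseA0B1.stepQ1 (1/3) (2/3) (by norm_num) (by norm_num)]; norm_num
    have e3 : F 0 1 (-1/3, 2/3) = (-1/3, 0) := by
      rw [CaseA0B1.stepQ2 (-1/3) (2/3) (by norm_num) (by norm_num)]; norm_num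
    have hper : Function.IsPeriodicPt (F 0 1) 3 (-1/3, 0) := by
      show (F 0 1)^[3] (-1/3, 0) = (-1/3, 0)
      show F 0 1 (F 0 1 (F 0 1 (-1/3, 0))) = (-1/3, 0)
      rw [e1, e2, e3]
    refine ⟨(-1/3, 0), ?_, by norm_num, ?_⟩
    · rcases (Nat.prime_three.eq_one_or_self_of_dvd _ hper.minimalPeriod_dvd) with h | h
      · exfalso
        have := Function.minimalPeriod_eq_one_iff_isFixedPt.mp h
        rw [Function.IsFixedPt, e1] at this
        exact absurd (congrArg Prod.fst this) (by norm_num)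
      · exact h
    · rw [iio3]
      rw [Set.image_insert_eq, Set.image_insert_eq, Set.image_singleton]
      have i0 : (F 0 1)^[0] (-1/3, 0) = (-1/3, 0) := rfl
      have i1 : (F 0 1)^[1] (-1/3, 0) = (1/3, 2/3) := by
        show F 0 1 (-1/3, 0) = (1/3, 2/3); exact e1
      have i2 : (F 0 1)^[2] (-1/3, 0) = (-1/3, 2/3) := by
        show F 0 1 (F 0 1 (-1/3, 0)) = (-1/3, 2/3); rw [e1, e2]
      rw [i0, i1, i2]
  · intro x hx
    exact CaseA0B1.reach_all hx
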